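/- arXiv:2406.00963 — 2 statements merged into one kernel-verified Lean document; each statement's English description precedes it below -/
import Mathlib

section
/- Let (I_1,…,I_r), (I'_1,…,I'_r), (J_1,…,J_q), (J'_1,…,J'_q) be sequences of weakly increasing tuples with entries in {1,…,n}, with |I_k| = |I'_k|, |J_k| = |J'_k|, satisfying the multiset equalities I_1 ⊎ ⋯ ⊎ I_r = J_1 ⊎ ⋯ ⊎ J_q and I'_1 ⊎ ⋯ ⊎ I'_r = J'_1 ⊎ ⋯ ⊎ J'_q. Define n×n nonnegative-integer matrices C = (c_{i,j}) and D = (d_{i,j}) by c_{i,j} = ∑_k #{l : the l-th entry of I_k is i and the l-th entry of I'_k is j} and d_{i,j} = ∑_k #{l : the l-th entry of J_k is i and the l-th entry of J'_k is j}. Then there exists B ∈ ℝ such that ∏_{k=1}^r per(A_{I_k,I'_k}) ≤ B·∏_{k=1}^q per(A_{J_k,J'_k}) for every totally positive n×n matrix A if and only if C* ≤ D* in the componentwise order; moreover, when C* ≤ D*, the bound B = |I_1|!·|I_2|!⋯|I_r|! works, i.e., ∏_{k=1}^r per(A_{I_k,I'_k}) ≤ |I_1|!⋯|I_r|!·∏_{k=1}^q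 per(A_{J_k,J'_k}) for every totally positive n×n matrix A. -/
open Matrix BigOperators

/-- The permanent of a square real matrix. -/
def per {r : ℕ} (B : Matrix (Fin r) (Fin r) ℝ) : ℝ :=
  ∑ σ : Equiv.Perm (Fin r), ∏ i, B i (σ i)

/-- An `n × n` real matrix is totally positive if all its minors are positive. -/
def TotallyPos {n : ℕ} (A : Matrix (Fin n) (Fin n) ℝ) : Prop :=
  ∀ (k : ℕ) (f g : Fin k → Fin n), StrictMono f → StrictMono g →
    0 < (A.submatrix f g).det

/-- `cstar C i j = ∑_{a ≤ i, b ≤ j} C a b`. -/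
def cstar {n : ℕ} (C : Matrix (Fin n) (Fin n) ℕ) (i j : Fin n) : ℕ :=
  ∑ a ∈ Finset.Iic i, ∑ b ∈ Finset.Iic j, C a b



lemma tp_entry_pos {n : ℕ} {A : Matrix (Fin n) (Fin n) ℝ} (hA : TotallyPos A) (i j : Fin n) :
    0 < A i j := by
  have h1 : StrictMono (fun _ : Fin 1 => i) := fun a b hab => absurd (Subsingleton.elim a b) hab.ne
  have h2 : StrictMono (fun _ : Fin 1 => j) := fun a b hab => absurd (Subsingleton.elim a b) hab.ne
  have := hA 1 _ _ h1 h2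
  simpa [Matrix.det_fin_one] using this

lemma strictMono_pair {n : ℕ} {i k : Fin n} (h : i < k) : StrictMono ![i, k] := by
  intro a b hab
  fin_cases a <;> fin_cases b <;> simp_all <;> omega

lemma tp_supermodular {n : ℕ} {A : Matrix (Fin n) (Fin n) ℝ} (hA : TotallyPos A)
    {i k j l : Fin n} (hik : i ≤ k) (hjl : j ≤ l) : A i l * A k j ≤ A i j * A k l := by
  rcases eq_or_lt_of_le hik with rfl | hik'
  · rw [mul_comm]
  rcases eq_or_lt_of_le hjl with rfl | hjl'
  · rw [mul_comm]
  have := hA 2 ![i, k] ![j, l] (strictMono_pair hik') (strictMono_pair hjl')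
  rw [Matrix.det_fin_two] at this
  simp only [Matrix.submatrix_apply] at this
  simp only [Matrix.cons_val_zero, Matrix.cons_val_one, Matrix.head_cons] at this
  linarith

lemma prod_swap_le {ι : Type*} [Fintype ι] [DecidableEq ι] (f g : ι → ℝ) (a b : ι) (hab : a ≠ b)
    (hfg : ∀ i, i ≠ a → i ≠ b → f i = g i) (h2 : f a * f b ≤ g a * g b)
    (hgpos : ∀ i, 0 < g i) (hfpos : ∀ i, 0 < f i) :
    ∏ i, f i ≤ ∏ i, g i := by
  have hb : b ∈ Finset.univ.erase a := Finset.mem_erase.mpr ⟨Ne.symm hab, Finset.mem_univ b⟩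
  have hf : ∏ i, f i = f a * (f b * ∏ i ∈ (Finset.univ.erase a).erase b, f i) := by
    rw [Finset.mul_prod_erase _ _ hb, Finset.mul_prod_erase _ _ (Finset.mem_univ a)]
  have hg : ∏ i, g i = g a * (g b * ∏ i ∈ (Finset.univ.erase a).erase b, g i) := by
    rw [Finset.mul_prod_erase _ _ hb, Finset.mul_prod_erase _ _ (Finset.mem_univ a)]
  have hrest : ∏ i ∈ (Finset.univ.erase a).erase b, f i
      = ∏ i ∈ (Finset.univ.erase a).erase b, g i := by
    refine Finset.prod_congr rfl fun i hi => ?_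
    rw [Finset.mem_erase, Finset.mem_erase] at hi
    exact hfg i hi.2.1 hi.1
  rw [hf, hg, ← mul_assoc, ← mul_assoc, hrest]
  apply mul_le_mul_of_nonneg_right h2
  exact le_of_lt (Finset.prod_pos fun i _ => hgpos i)

lemma sorted_max {n : ℕ} (A : Matrix (Fin n) (Fin n) ℝ)
    (hpos : ∀ i j, 0 < A i j)
    (hsm : ∀ ⦃i k j l : Fin n⦄, i ≤ k → j ≤ l → A i l * A k j ≤ A i j * A k l) :
    ∀ {s : ℕ} (m o : Fin s → Fin n), Monotone m → Monotone o → ∀ σ : Equiv.Perm (Fin s),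
      ∏ i, A (m i) (o (σ i)) ≤ ∏ i, A (m i) (o i) := by
  intro s
  induction s with
  | zero => intro m o _ _ σ; simp
  | succ t ih =>
    intro m o hm ho σ
    set p := σ⁻¹ 0 with hpdef
    have hp : σ p = 0 := Equiv.apply_symm_apply σ 0
    set σ' := σ * Equiv.swap 0 p with hσ'
    have hσ'0 : σ' 0 = 0 := by
      simp [hσ', Equiv.Perm.mul_apply, Equiv.swap_apply_left, hp]
    have step1 : ∏ i, A (m i) (o (σ i)) ≤ ∏ i, A (m i) (o (σ' i)) := by
      by_cases hp0 : p = 0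
      · apply le_of_eq
        refine Finset.prod_congr rfl fun i _ => ?_
        simp [hσ', hp0, Equiv.swap_self, Equiv.Perm.mul_apply]
      · refine prod_swap_le _ _ 0 p (Ne.symm hp0) ?_ ?_ (fun i => hpos _ _) (fun i => hpos _ _)
        · intro i hi0 hip
          have : Equiv.swap 0 p i = i := Equiv.swap_apply_of_ne_of_ne hi0 hip
          simp [hσ', Equiv.Perm.mul_apply, this]
        · have e1 : σ' 0 = 0 := hσ'0
          have e2 : σ' p = σ 0 := by
            simp [hσ', Equiv.Perm.mul_apply, Equiv.swap_apply_right]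
          rw [hp, e1, e2]
          exact hsm (hm (Fin.zero_le p)) (ho (Fin.zero_le (σ 0)))
    refine le_trans step1 ?_
    -- decompose σ'
    obtain ⟨⟨p', τ⟩, hd⟩ : ∃ pr, Equiv.Perm.decomposeFin.symm pr = σ' :=
      ⟨Equiv.Perm.decomposeFin σ', Equiv.symm_apply_apply _ _⟩
    have hp' : p' = 0 := by
      have := Equiv.Perm.decomposeFin_symm_apply_zero p' τ
      rw [hd, hσ'0] at this; exact this.symm
    have hsucc : ∀ x : Fin t, σ' x.succ = (τ x).succ := by
      intro x
      have := Equiv.Perm.decomposeFin_symm_apply_succ τ p' x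
      rw [hd] at this
      rw [this, hp', Equiv.swap_self]
      rfl
    rw [Fin.prod_univ_succ fun i => A (m i) (o (σ' i)),
      Fin.prod_univ_succ fun i => A (m i) (o i), hσ'0]
    have hmono1 : Monotone (m ∘ Fin.succ) := hm.comp Fin.strictMono_succ.monotone
    have hmono2 : Monotone (o ∘ Fin.succ) := ho.comp Fin.strictMono_succ.monotone
    have := ih (m ∘ Fin.succ) (o ∘ Fin.succ) hmono1 hmono2 τ
    simp only [Function.comp] at this
    have hrw : ∀ x : Fin t, A (m x.succ) (o (σ' x.succ)) = A (m x.succ) (o ((τ x).succ)) := by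
      intro x; rw [hsucc]
    calc A (m 0) (o 0) * ∏ i : Fin t, A (m i.succ) (o (σ' i.succ))
        = A (m 0) (o 0) * ∏ i : Fin t, A (m i.succ) (o ((τ i).succ)) := by
          congr 1; exact Finset.prod_congr rfl fun i _ => hrw i
      _ ≤ A (m 0) (o 0) * ∏ i : Fin t, A (m i.succ) (o i.succ) := by
          apply mul_le_mul_of_nonneg_left this (le_of_lt (hpos _ _))


lemma per_ge {n s : ℕ} (A : Matrix (Fin n) (Fin n) ℝ) (hpos : ∀ i j, 0 < A i j)
    (m o : Fin s → Fin n) :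
    ∏ i, A (m i) (o i) ≤ per (A.submatrix m o) := by
  have h := Finset.single_le_sum (f := fun σ : Equiv.Perm (Fin s) => ∏ i, A (m i) (o (σ i)))
    (fun σ _ => le_of_lt (Finset.prod_pos fun i _ => hpos _ _)) (Finset.mem_univ 1)
  simpa [per, Matrix.submatrix_apply] using h

lemma per_pos {n s : ℕ} (A : Matrix (Fin n) (Fin n) ℝ) (hpos : ∀ i j, 0 < A i j)
    (m o : Fin s → Fin n) : 0 < per (A.submatrix m o) :=
  lt_of_lt_of_le (Finset.prod_pos fun i _ => hpos (m i) (o i)) (per_ge A hpos m o)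

lemma per_le {n s : ℕ} (A : Matrix (Fin n) (Fin n) ℝ) (m o : Fin s → Fin n)
    (hsort : ∀ σ : Equiv.Perm (Fin s), ∏ i, A (m i) (o (σ i)) ≤ ∏ i, A (m i) (o i)) :
    per (A.submatrix m o) ≤ (Nat.factorial s : ℝ) * ∏ i, A (m i) (o i) := by
  have h := Finset.sum_le_card_nsmul Finset.univ
    (fun σ : Equiv.Perm (Fin s) => ∏ i, A (m i) (o (σ i))) (∏ i, A (m i) (o i))
    (fun σ _ => hsort σ)
  rw [Finset.card_univ, Fintype.card_perm, Fintype.card_fin, nsmul_eq_mul] at h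
  simpa [per, Matrix.submatrix_apply] using h

lemma prod_eq_pow_card {n s : ℕ} (A : Matrix (Fin n) (Fin n) ℝ) (m o : Fin s → Fin n) :
    ∏ l, A (m l) (o l)
      = ∏ i, ∏ j, A i j ^ (Finset.univ.filter fun l => m l = i ∧ o l = j).card := by
  have h := Finset.prod_fiberwise_of_maps_to' (s := (Finset.univ : Finset (Fin s)))
    (t := (Finset.univ : Finset (Fin n × Fin n))) (g := fun l => (m l, o l))
    (fun _ _ => Finset.mem_univ _) (fun p => A p.1 p.2)
  rw [← h, ← Finset.prod_product']
  refine Finset.prod_congr rfl fun p _ => ?_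
  rw [Finset.prod_const]
  congr 1
  apply Finset.card_nbij' id id <;> simp [Prod.ext_iff] <;> tauto


lemma abel1 (e f : ℕ → ℝ) (n : ℕ) :
    ∑ i ∈ Finset.range n, (∑ a ∈ Finset.range (i+1), e a) * (f i - f (i+1))
      = ∑ i ∈ Finset.range n, e i * f i - (∑ a ∈ Finset.range n, e a) * f n := by
  induction n with
  | zero => simp
  | succ n ih =>
    rw [Finset.sum_range_succ, ih, Finset.sum_range_succ (fun i => e i * f i),
      Finset.sum_range_succ e]
    ring

lemma abel2_nonneg (n : ℕ) (e L : ℕ → ℕ → ℝ)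
    (hLzero : ∀ i j, n ≤ i ∨ n ≤ j → L i j = 0)
    (hrow : ∀ a, a < n → ∑ b ∈ Finset.range n, e a b = 0)
    (hcol : ∀ b, b < n → ∑ a ∈ Finset.range n, e a b = 0)
    (hS : ∀ i j, i < n → j < n →
      0 ≤ ∑ a ∈ Finset.range (i+1), ∑ b ∈ Finset.range (j+1), e a b)
    (hsm : ∀ i j, i + 1 < n → j + 1 < n → L i (j+1) + L (i+1) j ≤ L i j + L (i+1) (j+1)) :
    0 ≤ ∑ i ∈ Finset.range n, ∑ j ∈ Finset.range n, e i j * L i j := by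
  have step1 : ∑ i ∈ Finset.range n, ∑ j ∈ Finset.range n, e i j * L i j
      = ∑ i ∈ Finset.range n, ∑ j ∈ Finset.range n,
          (∑ a ∈ Finset.range (i+1), e a j) * (L i j - L (i+1) j) := by
    rw [Finset.sum_comm]
    conv_rhs => rw [Finset.sum_comm]
    refine Finset.sum_congr rfl fun j hj => ?_
    have := abel1 (fun a => e a j) (fun i => L i j) n
    rw [hLzero n j (Or.inl le_rfl), mul_zero, sub_zero] at this
    exact this.symm
  have step2 : ∀ i ∈ Finset.range n,
      ∑ j ∈ Finset.range n, (∑ a ∈ Finset.range (i+1), e a j) * (L i j - L (i+1) j)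
      = ∑ j ∈ Finset.range n,
          (∑ a ∈ Finset.range (i+1), ∑ b ∈ Finset.range (j+1), e a b) *
            ((L i j - L (i+1) j) - (L i (j+1) - L (i+1) (j+1))) := by
    intro i _
    have := abel1 (fun j => ∑ a ∈ Finset.range (i+1), e a j)
      (fun j => L i j - L (i+1) j) n
    rw [hLzero i n (Or.inr le_rfl), hLzero (i+1) n (Or.inr le_rfl), sub_zero, mul_zero,
      sub_zero] at this
    rw [← this]
    refine Finset.sum_congr rfl fun j _ => ?_
    congr 1
    rw [Finset.sum_comm]
  rw [step1, Finset.sum_congr rfl step2]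
  refine Finset.sum_nonneg fun i hi => Finset.sum_nonneg fun j hj => ?_
  rw [Finset.mem_range] at hi hj
  rcases eq_or_lt_of_le (Nat.succ_le_of_lt hi) with hi1 | hi1
  · -- i+1 = n : S = 0 via hcol
    have hi1' : i + 1 = n := by omega
    have hz : ∑ a ∈ Finset.range (i+1), ∑ b ∈ Finset.range (j+1), e a b = 0 := by
      rw [Finset.sum_comm, hi1']
      exact Finset.sum_eq_zero fun b hb =>
        hcol b (Nat.lt_of_lt_of_le (Finset.mem_range.mp hb) (Nat.succ_le_of_lt hj))
    rw [hz, zero_mul]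
  rcases eq_or_lt_of_le (Nat.succ_le_of_lt hj) with hj1 | hj1
  · have hj1' : j + 1 = n := by omega
    have hz : ∑ a ∈ Finset.range (i+1), ∑ b ∈ Finset.range (j+1), e a b = 0 := by
      rw [hj1']
      exact Finset.sum_eq_zero fun a ha =>
        hrow a (by have := Finset.mem_range.mp ha; omega)
    rw [hz, zero_mul]
  · refine mul_nonneg (hS i j hi hj) ?_
    have := hsm i j hi1 hj1
    linarith

lemma sum_Iic_fin {M : Type*} [AddCommMonoid M] {n : ℕ} (f : Fin n → M) (i : Fin n) :
    ∑ a ∈ Finset.Iic i, f a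
      = ∑ a ∈ Finset.range ((i : ℕ)+1), (if h : a < n then f ⟨a, h⟩ else 0) := by
  have h1 : Finset.Iic i = Finset.univ.filter (· ≤ i) := by ext a; simp
  rw [h1, Finset.sum_filter]
  have h2 : ∑ a : Fin n, (if a ≤ i then f a else 0)
      = ∑ a ∈ Finset.range n,
          (if h : a < n then (if (⟨a, h⟩ : Fin n) ≤ i then f ⟨a, h⟩ else 0) else 0) := by
    rw [← Fin.sum_univ_eq_sum_range
      (fun a => if h : a < n then (if (⟨a, h⟩ : Fin n) ≤ i then f ⟨a, h⟩ else 0) else 0) n]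
    refine Finset.sum_congr rfl fun a _ => ?_
    rw [dif_pos a.isLt]
  rw [h2]
  rw [← Finset.sum_subset (Finset.range_subset_range.mpr (by omega : (i : ℕ) + 1 ≤ n))
    (fun x _ hx => ?_)]
  · refine Finset.sum_congr rfl fun a ha => ?_
    have ha' : a < n := by have := Finset.mem_range.mp ha; omega
    rw [dif_pos ha', dif_pos ha', if_pos]
    exact Fin.mk_le_mk.mpr (by have := Finset.mem_range.mp ha; omega)
  · have hx' : ¬ x < (i : ℕ) + 1 := fun hc => hx (Finset.mem_range.mpr hc)
    by_cases h : x < n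
    · rw [dif_pos h, if_neg]
      exact fun hc => hx' (by have := Fin.mk_le_mk.mp hc; omega)
    · rw [dif_neg h]

lemma cstar_cast {n : ℕ} (C : Matrix (Fin n) (Fin n) ℕ) (i j : Fin n) :
    (cstar C i j : ℝ) = ∑ a ∈ Finset.range ((i : ℕ)+1), ∑ b ∈ Finset.range ((j : ℕ)+1),
      (if h : a < n ∧ b < n then (C ⟨a, h.1⟩ ⟨b, h.2⟩ : ℝ) else 0) := by
  have : (cstar C i j : ℝ) = ∑ a ∈ Finset.Iic i, ∑ b ∈ Finset.Iic j, (C a b : ℝ) := by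
    rw [cstar]; push_cast; rfl
  rw [this]
  rw [sum_Iic_fin (fun a => ∑ b ∈ Finset.Iic j, (C a b : ℝ)) i]
  refine Finset.sum_congr rfl fun a ha => ?_
  have ha' : a < n := by have := Finset.mem_range.mp ha; omega
  rw [dif_pos ha']
  rw [sum_Iic_fin (fun b => (C ⟨a, ha'⟩ b : ℝ)) j]
  refine Finset.sum_congr rfl fun b hb => ?_
  by_cases hb' : b < n
  · rw [dif_pos hb', dif_pos ⟨ha', hb'⟩]
  · rw [dif_neg hb', dif_neg (by tauto)]

lemma monomial_le {n : ℕ} (A : Matrix (Fin n) (Fin n) ℝ) (hpos : ∀ i j, 0 < A i j)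
    (hsm : ∀ ⦃i k j l : Fin n⦄, i ≤ k → j ≤ l → A i l * A k j ≤ A i j * A k l)
    (C D : Matrix (Fin n) (Fin n) ℕ)
    (hrow : ∀ i, ∑ j, C i j = ∑ j, D i j)
    (hcol : ∀ j, ∑ i, C i j = ∑ i, D i j)
    (hcs : ∀ i j, cstar C i j ≤ cstar D i j) :
    ∏ i, ∏ j, A i j ^ C i j ≤ ∏ i, ∏ j, A i j ^ D i j := by
  -- convert to exponential form
  have hexp : ∀ (E : Matrix (Fin n) (Fin n) ℕ),
      ∏ i, ∏ j, A i j ^ E i j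
        = Real.exp (∑ i, ∑ j, (E i j : ℝ) * Real.log (A i j)) := by
    intro E
    rw [Real.exp_sum]
    refine Finset.prod_congr rfl fun i _ => ?_
    rw [Real.exp_sum]
    refine Finset.prod_congr rfl fun j _ => ?_
    rw [← Real.exp_log (hpos i j)]
    rw [← Real.exp_nat_mul, Real.exp_log (hpos i j)]
  rw [hexp C, hexp D, Real.exp_le_exp]
  rw [← sub_nonneg, ← Finset.sum_sub_distrib]
  simp only [← Finset.sum_sub_distrib, ← sub_mul]
  -- move to ℕ-indexed sums
  set eN : ℕ → ℕ → ℝ := fun a b =>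
    if h : a < n ∧ b < n then ((D ⟨a, h.1⟩ ⟨b, h.2⟩ : ℝ) - (C ⟨a, h.1⟩ ⟨b, h.2⟩ : ℝ)) else 0
    with heN
  set LN : ℕ → ℕ → ℝ := fun a b =>
    if h : a < n ∧ b < n then Real.log (A ⟨a, h.1⟩ ⟨b, h.2⟩) else 0 with hLN
  have hconv : ∑ i, ∑ j, ((D i j : ℝ) - (C i j : ℝ)) * Real.log (A i j)
      = ∑ i ∈ Finset.range n, ∑ j ∈ Finset.range n, eN i j * LN i j := by
    rw [Finset.sum_range fun i => ∑ j ∈ Finset.range n, eN i j * LN i j]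
    refine Finset.sum_congr rfl fun i _ => ?_
    rw [Finset.sum_range fun j => eN i j * LN i j]
    refine Finset.sum_congr rfl fun j _ => ?_
    simp only [heN, hLN, dif_pos (And.intro i.isLt j.isLt), Fin.eta]
  rw [hconv]
  apply abel2_nonneg
  · intro i j hij
    rw [hLN]
    simp only []
    rw [dif_neg (by omega)]
  · -- rows
    intro a ha
    rw [Finset.sum_range fun b => eN a b]
    have : ∀ b : Fin n, eN a b = (D ⟨a, ha⟩ b : ℝ) - (C ⟨a, ha⟩ b : ℝ) := by
      intro b; simp only [heN, dif_pos (And.intro ha b.isLt), Fin.eta]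
    rw [Finset.sum_congr rfl fun b _ => this b, Finset.sum_sub_distrib]
    rw [sub_eq_zero]
    exact_mod_cast (hrow ⟨a, ha⟩).symm
  · intro b hb
    rw [Finset.sum_range fun a => eN a b]
    have : ∀ a : Fin n, eN a b = (D a ⟨b, hb⟩ : ℝ) - (C a ⟨b, hb⟩ : ℝ) := by
      intro a; simp only [heN, dif_pos (And.intro a.isLt hb), Fin.eta]
    rw [Finset.sum_congr rfl fun a _ => this a, Finset.sum_sub_distrib]
    rw [sub_eq_zero]
    exact_mod_cast (hcol ⟨b, hb⟩).symm
  · intro i j hi hj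
    have hsplit : ∀ a b : ℕ, eN a b
        = (if h : a < n ∧ b < n then (D ⟨a, h.1⟩ ⟨b, h.2⟩ : ℝ) else 0)
          - (if h : a < n ∧ b < n then (C ⟨a, h.1⟩ ⟨b, h.2⟩ : ℝ) else 0) := by
      intro a b
      by_cases h : a < n ∧ b < n
      · simp only [heN, dif_pos h]
      · simp only [heN, dif_neg h, sub_zero]
    simp only [Finset.sum_congr rfl fun a _ => Finset.sum_congr rfl fun b _ => hsplit a b]
    simp only [Finset.sum_sub_distrib]
    rw [← cstar_cast C ⟨i, hi⟩ ⟨j, hj⟩, ← cstar_cast D ⟨i, hi⟩ ⟨j, hj⟩]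
    rw [sub_nonneg]
    exact_mod_cast hcs ⟨i, hi⟩ ⟨j, hj⟩
  · intro i j hi hj
    have h1 : i < n := by omega
    have h2 : j < n := by omega
    have h3 : i + 1 < n := hi
    have h4 : j + 1 < n := hj
    simp only [hLN, dif_pos (And.intro h1 h4), dif_pos (And.intro h3 h2),
      dif_pos (And.intro h1 h2), dif_pos (And.intro h3 h4)]
    rw [← Real.log_mul (ne_of_gt (hpos _ _)) (ne_of_gt (hpos _ _)),
      ← Real.log_mul (ne_of_gt (hpos _ _)) (ne_of_gt (hpos _ _))]
    apply Real.log_le_log (mul_pos (hpos _ _) (hpos _ _))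
    exact hsm (Fin.mk_le_mk.mpr (Nat.le_succ i)) (Fin.mk_le_mk.mpr (Nat.le_succ j))

lemma invOf_one_by_one (M : Matrix (Fin 1) (Fin 1) ℝ) [Invertible M] :
    ⅟M 0 0 = (M 0 0)⁻¹ := by
  have h := invOf_mul_self M
  have h00 : (⅟M * M) 0 0 = (1 : Matrix (Fin 1) (Fin 1) ℝ) 0 0 := by rw [h]
  rw [Matrix.mul_apply] at h00
  simp only [Fin.sum_univ_one, Matrix.one_apply_eq] at h00
  exact eq_inv_of_mul_eq_one_left h00

lemma cauchy_det_pos : ∀ (s : ℕ) (x y : Fin s → ℝ), StrictMono x → StrictMono y →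
    (∀ i j, 0 < x i + y j) →
    0 < (Matrix.of fun i j => (x i + y j)⁻¹).det := by
  intro s
  induction s with
  | zero => intro x y _ _ _; simp [Matrix.det_fin_zero]
  | succ t ih =>
    intro x y hx hy hxy
    set x' : Fin t → ℝ := fun a => x a.succ with hx'
    set y' : Fin t → ℝ := fun a => y a.succ with hy'
    set M : Matrix (Fin (t+1)) (Fin (t+1)) ℝ := Matrix.of fun i j => (x i + y j)⁻¹ with hM
    set e : Fin 1 ⊕ Fin t ≃ Fin (t+1) :=
      finSumFinEquiv.trans (finCongr (Nat.add_comm 1 t)) with he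
    have hdet : M.det = (M.submatrix e e).det := (Matrix.det_submatrix_equiv_self e M).symm
    have he0 : e (Sum.inl 0) = 0 := rfl
    have hesucc : ∀ i : Fin t, e (Sum.inr i) = i.succ := by
      intro i
      apply Fin.ext
      have : ((e (Sum.inr i)) : ℕ) = 1 + i := by simp [he, finSumFinEquiv]; omega
      rw [this, Fin.val_succ]
      omega
    set Ablk : Matrix (Fin 1) (Fin 1) ℝ := Matrix.of fun _ _ => (x 0 + y 0)⁻¹ with hAblk
    set Bblk : Matrix (Fin 1) (Fin t) ℝ := Matrix.of fun _ j => (x 0 + y' j)⁻¹ with hBblk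
    set Cblk : Matrix (Fin t) (Fin 1) ℝ := Matrix.of fun i _ => (x' i + y 0)⁻¹ with hCblk
    set Dblk : Matrix (Fin t) (Fin t) ℝ := Matrix.of fun i j => (x' i + y' j)⁻¹ with hDblk
    have hblocks : M.submatrix e e = Matrix.fromBlocks Ablk Bblk Cblk Dblk := by
      ext i j
      cases i with
      | inl i =>
        cases j with
        | inl j =>
          rw [Subsingleton.elim i 0, Subsingleton.elim j 0]
          show M (e (Sum.inl 0)) (e (Sum.inl 0)) = Ablk 0 0
          rw [he0]; rfl
        | inr j =>
          rw [Subsingleton.elim i 0]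
          show M (e (Sum.inl 0)) (e (Sum.inr j)) = Bblk 0 j
          rw [he0, hesucc]; rfl
      | inr i =>
        cases j with
        | inl j =>
          rw [Subsingleton.elim j 0]
          show M (e (Sum.inr i)) (e (Sum.inl 0)) = Cblk i 0
          rw [he0, hesucc]; rfl
        | inr j =>
          show M (e (Sum.inr i)) (e (Sum.inr j)) = Dblk i j
          rw [hesucc, hesucc]; rfl
    have hA00 : Ablk 0 0 = (x 0 + y 0)⁻¹ := rfl
    have hAdet : Ablk.det = (x 0 + y 0)⁻¹ := Matrix.det_fin_one Ablk
    have hAunit : IsUnit Ablk.det := by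
      rw [hAdet]
      exact isUnit_iff_ne_zero.mpr (inv_ne_zero (ne_of_gt (hxy 0 0)))
    have : Invertible Ablk := Ablk.invertibleOfIsUnitDet hAunit
    rw [hdet, hblocks, Matrix.det_fromBlocks₁₁]
    have hinv : ⅟Ablk 0 0 = x 0 + y 0 := by
      rw [invOf_one_by_one, hA00, inv_inv]
    set d : Fin t → ℝ := fun i => (x' i - x 0) / (x' i + y 0) with hd
    set g : Fin t → ℝ := fun j => (y' j - y 0) / (x 0 + y' j) with hg
    have hschur : Dblk - Cblk * ⅟Ablk * Bblk
        = Matrix.of fun i j => d i * (g j * (x' i + y' j)⁻¹) := by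
      ext i j
      have hmul : (Cblk * ⅟Ablk * Bblk) i j = Cblk i 0 * ⅟Ablk 0 0 * Bblk 0 j := by
        rw [Matrix.mul_apply, Fin.sum_univ_one, Matrix.mul_apply, Fin.sum_univ_one]
      simp only [Matrix.sub_apply, hmul, hinv]
      have h1 : (0:ℝ) < x' i + y' j := hxy _ _
      have h2 : (0:ℝ) < x' i + y 0 := hxy _ _
      have h3 : (0:ℝ) < x 0 + y' j := hxy _ _
      have h4 : (0:ℝ) < x 0 + y 0 := hxy _ _
      show (x' i + y' j)⁻¹ - (x' i + y 0)⁻¹ * (x 0 + y 0) * (x 0 + y' j)⁻¹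
        = (x' i - x 0) / (x' i + y 0) * ((y' j - y 0) / (x 0 + y' j) * (x' i + y' j)⁻¹)
      field_simp
      ring
    rw [hschur]
    have hrw : (Matrix.of fun i j => d i * (g j * (x' i + y' j)⁻¹))
        = Matrix.of (fun i j => d i *
            ((Matrix.of fun i j => g j * ((Matrix.of fun i j => (x' i + y' j)⁻¹) i j)) i j)) := by
      ext i j; rfl
    rw [hrw, Matrix.det_mul_column d, Matrix.det_mul_row g]
    have hih : 0 < (Matrix.of fun i j => (x' i + y' j)⁻¹).det :=
      ih x' y' (hx.comp Fin.strictMono_succ) (hy.comp Fin.strictMono_succ) (fun i j => hxy _ _)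
    have hdpos : ∀ i, 0 < d i := fun i =>
      div_pos (sub_pos.mpr (hx (Fin.succ_pos i))) (hxy _ _)
    have hgpos : ∀ j, 0 < g j := fun j =>
      div_pos (sub_pos.mpr (hy (Fin.succ_pos j))) (hxy _ _)
    rw [hAdet]
    have hinvpos : (0:ℝ) < (x 0 + y 0)⁻¹ := inv_pos.mpr (hxy 0 0)
    have hp1 : 0 < ∏ i, d i := Finset.prod_pos fun i _ => hdpos i
    have hp2 : 0 < ∏ j, g j := Finset.prod_pos fun j _ => hgpos j
    positivity
-- helper lemmas for the main theorem (margins, cstar as ite-sum, glob products)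
lemma row_margin {n r : ℕ} (lI : Fin r → ℕ) (I I' : (k : Fin r) → Fin (lI k) → Fin n)
    (C : Matrix (Fin n) (Fin n) ℕ)
    (hC : ∀ i j, C i j = ∑ k, (Finset.univ.filter fun l => I k l = i ∧ I' k l = j).card)
    (i : Fin n) : ∑ j, C i j = ∑ k, (Finset.univ.filter fun l => I k l = i).card := by
  simp only [hC]
  rw [Finset.sum_comm]
  refine Finset.sum_congr rfl fun k _ => ?_
  rw [Finset.card_eq_sum_card_fiberwise (f := fun l => I' k l) (t := Finset.univ)
    (fun _ _ => Finset.mem_univ _)]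
  refine Finset.sum_congr rfl fun j _ => ?_
  rw [Finset.filter_filter]

lemma col_margin {n r : ℕ} (lI : Fin r → ℕ) (I I' : (k : Fin r) → Fin (lI k) → Fin n)
    (C : Matrix (Fin n) (Fin n) ℕ)
    (hC : ∀ i j, C i j = ∑ k, (Finset.univ.filter fun l => I k l = i ∧ I' k l = j).card)
    (j : Fin n) : ∑ i, C i j = ∑ k, (Finset.univ.filter fun l => I' k l = j).card := by
  simp only [hC]
  rw [Finset.sum_comm]
  refine Finset.sum_congr rfl fun k _ => ?_
  rw [Finset.card_eq_sum_card_fiberwise (f := fun l => I k l) (t := Finset.univ)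
    (fun _ _ => Finset.mem_univ _)]
  refine Finset.sum_congr rfl fun i _ => ?_
  rw [Finset.filter_filter]
  congr 1
  ext l
  simp [and_comm]

lemma glob_prod {n r : ℕ} (A : Matrix (Fin n) (Fin n) ℝ) (lI : Fin r → ℕ)
    (I I' : (k : Fin r) → Fin (lI k) → Fin n) (C : Matrix (Fin n) (Fin n) ℕ)
    (hC : ∀ i j, C i j = ∑ k, (Finset.univ.filter fun l => I k l = i ∧ I' k l = j).card) :
    ∏ k, ∏ l, A (I k l) (I' k l) = ∏ i, ∏ j, A i j ^ C i j := by
  have h1 : ∀ k, ∏ l, A (I k l) (I' k l)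
      = ∏ i, ∏ j, A i j ^ (Finset.univ.filter fun l => I k l = i ∧ I' k l = j).card :=
    fun k => prod_eq_pow_card A (I k) (I' k)
  rw [Finset.prod_congr rfl fun k _ => h1 k]
  rw [Finset.prod_comm]
  refine Finset.prod_congr rfl fun i _ => ?_
  rw [Finset.prod_comm]
  refine Finset.prod_congr rfl fun j _ => ?_
  rw [Finset.prod_pow_eq_pow_sum, hC]

lemma cstar_ite {n : ℕ} (C : Matrix (Fin n) (Fin n) ℕ) (i0 j0 : Fin n) :
    cstar C i0 j0 = ∑ i, ∑ j, (if i ≤ i0 ∧ j ≤ j0 then C i j else 0) := by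
  rw [cstar]
  rw [show Finset.Iic i0 = Finset.univ.filter (· ≤ i0) from by ext a; simp]
  rw [Finset.sum_filter]
  refine Finset.sum_congr rfl fun i _ => ?_
  rw [show Finset.Iic j0 = Finset.univ.filter (· ≤ j0) from by ext a; simp]
  rw [Finset.sum_filter]
  by_cases h : i ≤ i0
  · simp only [h, if_true, true_and]
  · simp only [h, if_false, false_and, Finset.sum_const_zero]
lemma sufficiency_core {n : ℕ} (A : Matrix (Fin n) (Fin n) ℝ) (hA : TotallyPos A)
    {r q : ℕ} (lI : Fin r → ℕ) (lJ : Fin q → ℕ)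
    (I I' : (k : Fin r) → Fin (lI k) → Fin n) (J J' : (k : Fin q) → Fin (lJ k) → Fin n)
    (hI : ∀ k, Monotone (I k)) (hI' : ∀ k, Monotone (I' k))
    (C D : Matrix (Fin n) (Fin n) ℕ)
    (hC : ∀ i j, C i j = ∑ k, (Finset.univ.filter fun l => I k l = i ∧ I' k l = j).card)
    (hD : ∀ i j, D i j = ∑ k, (Finset.univ.filter fun l => J k l = i ∧ J' k l = j).card)
    (hrow : ∀ i, ∑ j, C i j = ∑ j, D i j) (hcol : ∀ j, ∑ i, C i j = ∑ i, D i j)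
    (hcs : ∀ i j, cstar C i j ≤ cstar D i j) :
    (∏ k, per (A.submatrix (I k) (I' k))) ≤
      (∏ k, (Nat.factorial (lI k) : ℝ)) * ∏ k, per (A.submatrix (J k) (J' k)) := by
  have hpos := tp_entry_pos hA
  have hsm : ∀ ⦃i k j l : Fin n⦄, i ≤ k → j ≤ l → A i l * A k j ≤ A i j * A k l :=
    fun i k j l h1 h2 => tp_supermodular hA h1 h2
  have hfacnn : (0:ℝ) ≤ ∏ k, (Nat.factorial (lI k) : ℝ) :=
    Finset.prod_nonneg fun k _ => by positivity
  calc ∏ k, per (A.submatrix (I k) (I' k))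
      ≤ ∏ k, ((Nat.factorial (lI k) : ℝ) * ∏ l, A (I k l) (I' k l)) :=
        Finset.prod_le_prod (fun k _ => le_of_lt (per_pos A hpos _ _))
          (fun k _ => per_le A (I k) (I' k)
            (fun σ => sorted_max A hpos hsm (I k) (I' k) (hI k) (hI' k) σ))
    _ = (∏ k, (Nat.factorial (lI k) : ℝ)) * ∏ k, ∏ l, A (I k l) (I' k l) :=
        Finset.prod_mul_distrib
    _ = (∏ k, (Nat.factorial (lI k) : ℝ)) * ∏ i, ∏ j, A i j ^ C i j := by
        rw [glob_prod A lI I I' C hC]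
    _ ≤ (∏ k, (Nat.factorial (lI k) : ℝ)) * ∏ i, ∏ j, A i j ^ D i j :=
        mul_le_mul_of_nonneg_left (monomial_le A hpos hsm C D hrow hcol hcs) hfacnn
    _ = (∏ k, (Nat.factorial (lI k) : ℝ)) * ∏ k, ∏ l, A (J k l) (J' k l) := by
        rw [glob_prod A lJ J J' D hD]
    _ ≤ (∏ k, (Nat.factorial (lI k) : ℝ)) * ∏ k, per (A.submatrix (J k) (J' k)) :=
        mul_le_mul_of_nonneg_left
          (Finset.prod_le_prod
            (fun k _ => Finset.prod_nonneg fun l _ => le_of_lt (hpos _ _))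
            (fun k _ => per_ge A hpos (J k) (J' k)))
          hfacnn
lemma necessity_core {n r q : ℕ} (lI : Fin r → ℕ) (lJ : Fin q → ℕ)
    (I I' : (k : Fin r) → Fin (lI k) → Fin n) (J J' : (k : Fin q) → Fin (lJ k) → Fin n)
    (hJ : ∀ k, Monotone (J k)) (hJ' : ∀ k, Monotone (J' k))
    (C D : Matrix (Fin n) (Fin n) ℕ)
    (hC : ∀ i j, C i j = ∑ k, (Finset.univ.filter fun l => I k l = i ∧ I' k l = j).card)
    (hD : ∀ i j, D i j = ∑ k, (Finset.univ.filter fun l => J k l = i ∧ J' k l = j).card)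
    (hrow : ∀ i, ∑ j, C i j = ∑ j, D i j) (hcol : ∀ j, ∑ i, C i j = ∑ i, D i j)
    (B : ℝ)
    (hB : ∀ A : Matrix (Fin n) (Fin n) ℝ, TotallyPos A →
      (∏ k, per (A.submatrix (I k) (I' k))) ≤ B * ∏ k, per (A.submatrix (J k) (J' k)))
    (i0 j0 : Fin n) : cstar C i0 j0 ≤ cstar D i0 j0 := by
  have hn : 0 < n := i0.pos
  set u : Fin n → ℕ := fun i => if i0 < i then 1 else 0 with hu
  set v : Fin n → ℕ := fun j => if j0 < j then 1 else 0 with hv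
  set N : ℕ := ∑ i, ∑ j, C i j with hN
  set K : ℕ := n * N + n with hK
  set α : Fin n → ℕ := fun i => K * u i + i + 1 with hα
  set β : Fin n → ℕ := fun j => K * v j + j + 1 with hβ
  set m : Fin n → Fin n → ℕ := fun i j => max (α i) (β j) with hm
  set SC : ℕ := ∑ i, ∑ j, C i j * m i j with hSC
  set SD : ℕ := ∑ i, ∑ j, D i j * m i j with hSD
  -- total masses agree
  have hND : ∑ i, ∑ j, D i j = N := by
    rw [hN]; exact (Finset.sum_congr rfl fun i _ => (hrow i).symm)
  -- bounds on m
  have hmlb : ∀ i j, K * max (u i) (v j) + 1 ≤ m i j := by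
    intro i j
    have hi := i.isLt; have hj := j.isLt
    simp only [hm, hα, hβ, hu, hv]
    split_ifs <;> simp <;> omega
  have hmub : ∀ i j, m i j ≤ K * max (u i) (v j) + n := by
    intro i j
    have hi := i.isLt; have hj := j.isLt
    simp only [hm, hα, hβ, hu, hv]
    split_ifs <;> simp <;> omega
  -- analytic part : SD ≤ SC
  have key : SD ≤ SC := by
    by_contra hlt
    push_neg at hlt
    set B' : ℝ := B * ∏ k, (Nat.factorial (lJ k) : ℝ) with hB'
    have main : ∀ t : ℝ, 1 < t → t ≤ 2 ^ N * B' := by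
      intro t ht
      have ht0 : (0:ℝ) < t := lt_trans one_pos ht
      have ht1 : (1:ℝ) ≤ t := le_of_lt ht
      set x : Fin n → ℝ := fun i => t ^ α i with hx
      set y : Fin n → ℝ := fun j => t ^ β j with hy
      have hαmono : StrictMono α := by
        intro a b hab
        have hval : (a:ℕ) < (b:ℕ) := hab
        have huab : u a ≤ u b := by
          simp only [hu]
          by_cases h1 : i0 < a
          · rw [if_pos h1, if_pos (h1.trans hab)]
          · rw [if_neg h1]; exact Nat.zero_le _
        have hKu : K * u a ≤ K * u b := Nat.mul_le_mul_left K huab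
        simp only [hα]; omega
      have hβmono : StrictMono β := by
        intro a b hab
        have hval : (a:ℕ) < (b:ℕ) := hab
        have hvab : v a ≤ v b := by
          simp only [hv]
          by_cases h1 : j0 < a
          · rw [if_pos h1, if_pos (h1.trans hab)]
          · rw [if_neg h1]; exact Nat.zero_le _
        have hKv : K * v a ≤ K * v b := Nat.mul_le_mul_left K hvab
        simp only [hβ]; omega
      have hxmono : StrictMono x := fun a b hab => pow_lt_pow_right₀ ht (hαmono hab)
      have hymono : StrictMono y := fun a b hab => pow_lt_pow_right₀ ht (hβmono hab)
      have hxy : ∀ i j, 0 < x i + y j := by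
        intro i j
        have : (0:ℝ) < t ^ α i := pow_pos ht0 _
        have : (0:ℝ) < t ^ β j := pow_pos ht0 _
        simp only [hx, hy]
        positivity
      set A : Matrix (Fin n) (Fin n) ℝ := Matrix.of fun i j => (x i + y j)⁻¹ with hA
      have hATP : TotallyPos A := by
        intro k f g hf hg
        have : A.submatrix f g = Matrix.of fun i j => ((x ∘ f) i + (y ∘ g) j)⁻¹ := rfl
        rw [this]
        exact cauchy_det_pos k (x ∘ f) (y ∘ g) (hxmono.comp hf) (hymono.comp hg)
          (fun i j => hxy _ _)
      have hpos : ∀ i j, 0 < A i j := fun i j => inv_pos.mpr (hxy i j)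
      have hsm : ∀ ⦃i k j l : Fin n⦄, i ≤ k → j ≤ l → A i l * A k j ≤ A i j * A k l :=
        fun i k j l h1 h2 => tp_supermodular hATP h1 h2
      -- entrywise bounds
      have htm : ∀ i j, (0:ℝ) < t ^ m i j := fun i j => pow_pos ht0 _
      have hup : ∀ i j, A i j ≤ (t ^ m i j)⁻¹ := by
        intro i j
        apply inv_anti₀ (htm i j)
        rcases max_choice (α i) (β j) with h | h
        · rw [hm]
          simp only []
          rw [h]
          have : (0:ℝ) < y j := pow_pos ht0 _
          show t ^ α i ≤ x i + y j
          simp only [hx]; linarith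
        · rw [hm]
          simp only []
          rw [h]
          have : (0:ℝ) < x i := pow_pos ht0 _
          show t ^ β j ≤ x i + y j
          simp only [hy]; linarith
      have hlow : ∀ i j, (2 * t ^ m i j)⁻¹ ≤ A i j := by
        intro i j
        apply inv_anti₀ (hxy i j)
        have h1 : x i ≤ t ^ m i j := by
          simp only [hx]
          exact pow_le_pow_right₀ ht1 (le_max_left _ _)
        have h2 : y j ≤ t ^ m i j := by
          simp only [hy]
          exact pow_le_pow_right₀ ht1 (le_max_right _ _)
        linarith
      -- product bounds
      have h2N : (0:ℝ) < 2 ^ N := by positivity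
      have htSC : (0:ℝ) < t ^ SC := pow_pos ht0 _
      have htSD : (0:ℝ) < t ^ SD := pow_pos ht0 _
      have hprodC : ((2:ℝ) ^ N)⁻¹ * (t ^ SC)⁻¹ ≤ ∏ i, ∏ j, A i j ^ C i j := by
        have step : ∏ i, ∏ j, ((2 * t ^ m i j)⁻¹) ^ C i j ≤ ∏ i, ∏ j, A i j ^ C i j :=
          Finset.prod_le_prod (fun i _ => Finset.prod_nonneg fun j _ => by positivity)
            (fun i _ => Finset.prod_le_prod (fun j _ => by positivity)
              (fun j _ => pow_le_pow_left₀ (by positivity) (hlow i j) _))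
        refine le_trans (le_of_eq ?_) step
        rw [← mul_inv]
        rw [show ((2:ℝ)^N * t^SC) = ∏ i, ∏ j, (2 * t ^ m i j) ^ C i j from ?_]
        · rw [← Finset.prod_inv_distrib]
          refine Finset.prod_congr rfl fun i _ => ?_
          rw [← Finset.prod_inv_distrib]
          refine Finset.prod_congr rfl fun j _ => ?_
          rw [inv_pow]
        · simp only [mul_pow]
          simp only [Finset.prod_mul_distrib]
          congr 1
          · rw [Finset.prod_congr rfl fun i (_ : i ∈ Finset.univ) =>
              Finset.prod_pow_eq_pow_sum Finset.univ (fun j => C i j) (2:ℝ),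
              Finset.prod_pow_eq_pow_sum, hN]
          · simp only [← pow_mul]
            rw [Finset.prod_congr rfl fun i (_ : i ∈ Finset.univ) =>
              Finset.prod_pow_eq_pow_sum Finset.univ (fun j => m i j * C i j) (t:ℝ),
              Finset.prod_pow_eq_pow_sum, hSC]
            congr 1
            refine Finset.sum_congr rfl fun i _ => Finset.sum_congr rfl fun j _ => ?_
            ring
      have hprodD : ∏ i, ∏ j, A i j ^ D i j ≤ ((t:ℝ) ^ SD)⁻¹ := by
        have step : ∏ i, ∏ j, A i j ^ D i j ≤ ∏ i, ∏ j, ((t ^ m i j)⁻¹) ^ D i j :=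
          Finset.prod_le_prod (fun i _ => Finset.prod_nonneg fun j _ => by
              have := hpos i j; positivity)
            (fun i _ => Finset.prod_le_prod (fun j _ => by have := hpos i j; positivity)
              (fun j _ => pow_le_pow_left₀ (le_of_lt (hpos i j)) (hup i j) _))
        refine le_trans step (le_of_eq ?_)
        rw [show ((t:ℝ)^SD) = ∏ i, ∏ j, (t ^ m i j) ^ D i j from ?_]
        · rw [← Finset.prod_inv_distrib]
          refine Finset.prod_congr rfl fun i _ => ?_
          rw [← Finset.prod_inv_distrib]
          refine Finset.prod_congr rfl fun j _ => ?_
          rw [inv_pow]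
        · simp only [← pow_mul]
          rw [Finset.prod_congr rfl fun i (_ : i ∈ Finset.univ) =>
            Finset.prod_pow_eq_pow_sum Finset.univ (fun j => m i j * D i j) (t:ℝ),
            Finset.prod_pow_eq_pow_sum, hSD]
          congr 1
          refine Finset.sum_congr rfl fun i _ => Finset.sum_congr rfl fun j _ => ?_
          ring
      -- B positive
      have hperJpos : 0 < ∏ k, per (A.submatrix (J k) (J' k)) :=
        Finset.prod_pos fun k _ => per_pos A hpos _ _
      have hperIpos : 0 < ∏ k, per (A.submatrix (I k) (I' k)) :=
        Finset.prod_pos fun k _ => per_pos A hpos _ _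
      have hBpos : 0 < B := by
        have h := lt_of_lt_of_le hperIpos (hB A hATP)
        rcases mul_pos_iff.mp h with ⟨h1, _⟩ | ⟨_, h2⟩
        · exact h1
        · linarith
      have hfacpos : (0:ℝ) < ∏ k, (Nat.factorial (lJ k) : ℝ) :=
        Finset.prod_pos fun k _ => by positivity
      have hB'pos : 0 < B' := mul_pos hBpos hfacpos
      -- the chain
      have chain : ((2:ℝ) ^ N)⁻¹ * (t ^ SC)⁻¹ ≤ B' * (t ^ SD)⁻¹ := by
        calc ((2:ℝ) ^ N)⁻¹ * (t ^ SC)⁻¹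
            ≤ ∏ i, ∏ j, A i j ^ C i j := hprodC
          _ = ∏ k, ∏ l, A (I k l) (I' k l) := (glob_prod A lI I I' C hC).symm
          _ ≤ ∏ k, per (A.submatrix (I k) (I' k)) :=
              Finset.prod_le_prod
                (fun k _ => Finset.prod_nonneg fun l _ => le_of_lt (hpos _ _))
                (fun k _ => per_ge A hpos (I k) (I' k))
          _ ≤ B * ∏ k, per (A.submatrix (J k) (J' k)) := hB A hATP
          _ ≤ B * ∏ k, ((Nat.factorial (lJ k) : ℝ) * ∏ l, A (J k l) (J' k l)) :=
              mul_le_mul_of_nonneg_left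
                (Finset.prod_le_prod (fun k _ => le_of_lt (per_pos A hpos _ _))
                  (fun k _ => per_le A (J k) (J' k)
                    (fun σ => sorted_max A hpos hsm (J k) (J' k) (hJ k) (hJ' k) σ)))
                (le_of_lt hBpos)
          _ = B' * ∏ k, ∏ l, A (J k l) (J' k l) := by
              rw [Finset.prod_mul_distrib, hB']; ring
          _ = B' * ∏ i, ∏ j, A i j ^ D i j := by rw [glob_prod A lJ J J' D hD]
          _ ≤ B' * (t ^ SD)⁻¹ := mul_le_mul_of_nonneg_left hprodD (le_of_lt hB'pos)
      -- extract t ≤ 2^N * B'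
      have hpow : t ^ (SC + 1) ≤ t ^ SD := pow_le_pow_right₀ ht1 hlt
      have chain2 : ((2:ℝ) ^ N)⁻¹ * (t ^ SC)⁻¹ ≤ B' * (t ^ (SC + 1))⁻¹ :=
        le_trans chain (mul_le_mul_of_nonneg_left
          (inv_anti₀ (pow_pos ht0 _) hpow) (le_of_lt hB'pos))
      rw [pow_succ] at chain2
      have h5 := mul_le_mul_of_nonneg_left chain2 (le_of_lt (mul_pos h2N (mul_pos htSC ht0)))
      have e1 : (2:ℝ) ^ N * (t ^ SC * t) * (((2:ℝ) ^ N)⁻¹ * (t ^ SC)⁻¹) = t := by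
        field_simp
      have e2 : (2:ℝ) ^ N * (t ^ SC * t) * (B' * (t ^ SC * t)⁻¹) = 2 ^ N * B' := by
        have : t ^ SC * t ≠ 0 := by positivity
        field_simp
      rw [e1, e2] at h5
      exact h5
    -- contradiction
    set t0 : ℝ := max 2 (2 ^ N * B' + 1) with ht0def
    have ht0gt : 1 < t0 := lt_of_lt_of_le one_lt_two (le_max_left _ _)
    have := main t0 ht0gt
    have : 2 ^ N * B' + 1 ≤ t0 := le_max_right _ _
    linarith [main t0 ht0gt]
  -- combinatorial part
  set PC : ℕ := ∑ i, ∑ j, C i j * max (u i) (v j) with hPC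
  set PD : ℕ := ∑ i, ∑ j, D i j * max (u i) (v j) with hPD
  set RC : ℕ := ∑ i, ∑ j, C i j * u i with hRC
  set RD : ℕ := ∑ i, ∑ j, D i j * u i with hRD
  set QC : ℕ := ∑ i, ∑ j, C i j * v j with hQC
  set QD : ℕ := ∑ i, ∑ j, D i j * v j with hQD
  set WC : ℕ := ∑ i, ∑ j, C i j * (u i * v j) with hWC
  set WD : ℕ := ∑ i, ∑ j, D i j * (u i * v j) with hWD
  -- SC upper bound
  have hSCub : SC ≤ K * PC + n * N := by
    have step : SC ≤ ∑ i, ∑ j, C i j * (K * max (u i) (v j) + n) := by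
      rw [hSC]
      exact Finset.sum_le_sum fun i _ => Finset.sum_le_sum fun j _ =>
        Nat.mul_le_mul_left _ (hmub i j)
    refine le_trans step (le_of_eq ?_)
    have e : ∀ i j, C i j * (K * max (u i) (v j) + n)
        = K * (C i j * max (u i) (v j)) + n * C i j := fun i j => by ring
    simp only [e, Finset.sum_add_distrib, ← Finset.mul_sum]
    rfl
  have hSDlb : K * PD + N ≤ SD := by
    have step : ∑ i, ∑ j, D i j * (K * max (u i) (v j) + 1) ≤ SD := by
      rw [hSD]
      exact Finset.sum_le_sum fun i _ => Finset.sum_le_sum fun j _ =>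
        Nat.mul_le_mul_left _ (hmlb i j)
    refine le_trans (le_of_eq ?_) step
    have e : ∀ i j, D i j * (K * max (u i) (v j) + 1)
        = K * (D i j * max (u i) (v j)) + D i j := fun i j => by ring
    simp only [e, Finset.sum_add_distrib, ← Finset.mul_sum]
    rw [hND]
  -- identities
  have hidC : PC + WC = RC + QC := by
    simp only [hPC, hWC, hRC, hQC, ← Finset.sum_add_distrib]
    refine Finset.sum_congr rfl fun i _ => Finset.sum_congr rfl fun j _ => ?_
    simp only [hu, hv]
    by_cases h1 : i0 < i <;> by_cases h2 : j0 < j <;> simp [h1, h2]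
  have hidD : PD + WD = RD + QD := by
    simp only [hPD, hWD, hRD, hQD, ← Finset.sum_add_distrib]
    refine Finset.sum_congr rfl fun i _ => Finset.sum_congr rfl fun j _ => ?_
    simp only [hu, hv]
    by_cases h1 : i0 < i <;> by_cases h2 : j0 < j <;> simp [h1, h2]
  have hcstarC : cstar C i0 j0 + RC + QC = N + WC := by
    rw [cstar_ite]
    simp only [hRC, hQC, hN, hWC, ← Finset.sum_add_distrib]
    refine Finset.sum_congr rfl fun i _ => Finset.sum_congr rfl fun j _ => ?_
    simp only [hu, hv]
    by_cases h1 : i0 < i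
    · by_cases h2 : j0 < j
      · rw [if_neg (fun hc => absurd hc.1 (not_le.mpr h1)), if_pos h1, if_pos h2]; ring
      · rw [if_neg (fun hc => absurd hc.1 (not_le.mpr h1)), if_pos h1, if_neg h2]; ring
    · by_cases h2 : j0 < j
      · rw [if_neg (fun hc => absurd hc.2 (not_le.mpr h2)), if_neg h1, if_pos h2]; ring
      · rw [if_pos ⟨not_lt.mp h1, not_lt.mp h2⟩, if_neg h1, if_neg h2]; ring
  have hcstarD : cstar D i0 j0 + RD + QD = N + WD := by
    rw [cstar_ite, ← hND]
    simp only [hRD, hQD, hWD, ← Finset.sum_add_distrib]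
    refine Finset.sum_congr rfl fun i _ => Finset.sum_congr rfl fun j _ => ?_
    simp only [hu, hv]
    by_cases h1 : i0 < i
    · by_cases h2 : j0 < j
      · rw [if_neg (fun hc => absurd hc.1 (not_le.mpr h1)), if_pos h1, if_pos h2]; ring
      · rw [if_neg (fun hc => absurd hc.1 (not_le.mpr h1)), if_pos h1, if_neg h2]; ring
    · by_cases h2 : j0 < j
      · rw [if_neg (fun hc => absurd hc.2 (not_le.mpr h2)), if_neg h1, if_pos h2]; ring
      · rw [if_pos ⟨not_lt.mp h1, not_lt.mp h2⟩, if_neg h1, if_neg h2]; ring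
  -- margins transfer
  have hRCD : RC = RD := by
    rw [hRC, hRD]
    refine Finset.sum_congr rfl fun i _ => ?_
    rw [← Finset.sum_mul, ← Finset.sum_mul, hrow]
  have hQCD : QC = QD := by
    rw [hQC, hQD, Finset.sum_comm]
    conv_rhs => rw [Finset.sum_comm]
    refine Finset.sum_congr rfl fun j _ => ?_
    rw [← Finset.sum_mul, ← Finset.sum_mul, hcol]
  -- PD ≤ PC
  have hPDC : PD ≤ PC := by
    by_contra hcon
    push_neg at hcon
    have hmul : K * (PC + 1) ≤ K * PD := Nat.mul_le_mul_left K hcon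
    rw [Nat.mul_add, Nat.mul_one] at hmul
    omega
  omega

theorem stmt5 (n r q : ℕ) (lI : Fin r → ℕ) (lJ : Fin q → ℕ)
    (I I' : (k : Fin r) → Fin (lI k) → Fin n)
    (J J' : (k : Fin q) → Fin (lJ k) → Fin n)
    (hI : ∀ k, Monotone (I k)) (hI' : ∀ k, Monotone (I' k))
    (hJ : ∀ k, Monotone (J k)) (hJ' : ∀ k, Monotone (J' k))
    (hmulti : ∀ i : Fin n,
      ((∑ k, (Finset.univ.filter fun l => I k l = i).card) =
        ∑ k, (Finset.univ.filter fun l => J k l = i).card) ∧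
      ((∑ k, (Finset.univ.filter fun l => I' k l = i).card) =
        ∑ k, (Finset.univ.filter fun l => J' k l = i).card))
    (C D : Matrix (Fin n) (Fin n) ℕ)
    (hC : ∀ i j, C i j = ∑ k, (Finset.univ.filter fun l => I k l = i ∧ I' k l = j).card)
    (hD : ∀ i j, D i j = ∑ k, (Finset.univ.filter fun l => J k l = i ∧ J' k l = j).card) :
    ((∃ B : ℝ, ∀ A : Matrix (Fin n) (Fin n) ℝ, TotallyPos A →
        (∏ k, per (A.submatrix (I k) (I' k))) ≤
          B * ∏ k, per (A.submatrix (J k) (J' k))) ↔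
      (∀ i j, cstar C i j ≤ cstar D i j)) ∧
    ((∀ i j, cstar C i j ≤ cstar D i j) →
      ∀ A : Matrix (Fin n) (Fin n) ℝ, TotallyPos A →
        (∏ k, per (A.submatrix (I k) (I' k))) ≤
          (∏ k, (Nat.factorial (lI k) : ℝ)) * ∏ k, per (A.submatrix (J k) (J' k))) := by
  have hrow : ∀ i, ∑ j, C i j = ∑ j, D i j := fun i => by
    rw [row_margin lI I I' C hC i, row_margin lJ J J' D hD i]
    exact (hmulti i).1
  have hcol : ∀ j, ∑ i, C i j = ∑ i, D i j := fun j => by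
    rw [col_margin lI I I' C hC j, col_margin lJ J J' D hD j]
    exact (hmulti j).2
  constructor
  · constructor
    · rintro ⟨B, hB⟩ i j
      exact necessity_core lI lJ I I' J J' hJ hJ' C D hC hD hrow hcol B hB i j
    · intro hcs
      exact ⟨∏ k, (Nat.factorial (lI k) : ℝ), fun A hA =>
        sufficiency_core A hA lI lJ I I' J J' hI hI' C D hC hD hrow hcol hcs⟩
  · intro hcs A hA
    exact sufficiency_core A hA lI lJ I I' J J' hI hI' C D hC hD hrow hcol hcs
end

section
/- For every totally nonnegative 3×3 matrix A = (a_{i,j}), both 3·per(A_{{1,2},{1,2}})·a_{3,3} ≥ per(A) and 3·per(A_{{2,3},{2,3}})·a_{1,1} ≥ per(A) hold. -/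
open Matrix BigOperators

/-- An `n × n` real matrix is totally nonnegative if all its minors are nonnegative. -/
def TotallyNonneg {n : ℕ} (A : Matrix (Fin n) (Fin n) ℝ) : Prop :=
  ∀ (k : ℕ) (f g : Fin k → Fin n), StrictMono f → StrictMono g →
    0 ≤ (A.submatrix f g).det

lemma per3 (B : Matrix (Fin 3) (Fin 3) ℝ) : per B =
    B 0 0 * B 1 1 * B 2 2 + B 0 0 * B 1 2 * B 2 1 + B 0 1 * B 1 0 * B 2 2
    + B 0 1 * B 1 2 * B 2 0 + B 0 2 * B 1 0 * B 2 1 + B 0 2 * B 1 1 * B 2 0 := by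
  rw [per]
  rw [show (Finset.univ : Finset (Equiv.Perm (Fin 3))) =
    {Equiv.refl _, Equiv.swap 0 1, Equiv.swap 0 2, Equiv.swap 1 2,
     Equiv.swap 0 1 * Equiv.swap 1 2, Equiv.swap 1 2 * Equiv.swap 0 1} from by decide]
  rw [Finset.sum_insert (by decide), Finset.sum_insert (by decide),
      Finset.sum_insert (by decide), Finset.sum_insert (by decide),
      Finset.sum_insert (by decide), Finset.sum_singleton]
  simp [Fin.prod_univ_three, Equiv.swap_apply_def]
  ring

lemma per2 (B : Matrix (Fin 2) (Fin 2) ℝ) : per B = B 0 0 * B 1 1 + B 0 1 * B 1 0 := by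
  rw [per]
  rw [show (Finset.univ : Finset (Equiv.Perm (Fin 2))) =
    {Equiv.refl _, Equiv.swap 0 1} from by decide]
  rw [Finset.sum_insert (by decide), Finset.sum_singleton]
  simp [Fin.prod_univ_two, Equiv.swap_apply_def]

theorem stmt10 (A : Matrix (Fin 3) (Fin 3) ℝ) (hA : TotallyNonneg A) :
    per A ≤ 3 * (per (A.submatrix ![0, 1] ![0, 1]) * A 2 2) ∧
    per A ≤ 3 * (per (A.submatrix ![1, 2] ![1, 2]) * A 0 0) := by
  have ent : ∀ i j : Fin 3, 0 ≤ A i j := by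
    intro i j
    have := hA 1 ![i] ![j] (Subsingleton.strictMono _) (Subsingleton.strictMono _)
    rw [Matrix.det_fin_one] at this
    simpa [Matrix.det_fin_one] using this
  have minor : ∀ i₁ i₂ j₁ j₂ : Fin 3, i₁ < i₂ → j₁ < j₂ →
      A i₁ j₂ * A i₂ j₁ ≤ A i₁ j₁ * A i₂ j₂ := by
    intro i₁ i₂ j₁ j₂ hi hj
    have := hA 2 ![i₁, i₂] ![j₁, j₂]
      (by intro a b h; fin_cases a <;> fin_cases b <;> simp_all)
      (by intro a b h; fin_cases a <;> fin_cases b <;> simp_all)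
    rw [Matrix.det_fin_two] at this
    simp [Matrix.det_fin_two] at this
    linarith
  rw [per3, per2, per2]
  simp only [Matrix.submatrix_apply]
  norm_num
  have m1 := minor 0 1 0 1 (by decide) (by decide)
  have m2 := minor 0 1 0 2 (by decide) (by decide)
  have m4 := minor 0 2 0 1 (by decide) (by decide)
  have m5 := minor 0 2 0 2 (by decide) (by decide)
  have m6 := minor 0 2 1 2 (by decide) (by decide)
  have m8 := minor 1 2 0 2 (by decide) (by decide)
  have m9 := minor 1 2 1 2 (by decide) (by decide)
  constructor
  · nlinarith [mul_le_mul_of_nonneg_left m6 (ent 1 0), mul_le_mul_of_nonneg_left m8 (ent 0 1),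
      mul_le_mul_of_nonneg_left m9 (ent 0 0), mul_le_mul_of_nonneg_left m5 (ent 1 1),
      mul_nonneg (mul_nonneg (ent 0 0) (ent 1 1)) (ent 2 2),
      mul_nonneg (mul_nonneg (ent 0 1) (ent 1 0)) (ent 2 2)]
  · nlinarith [mul_le_mul_of_nonneg_left m2 (ent 2 1), mul_le_mul_of_nonneg_left m4 (ent 1 2),
      mul_le_mul_of_nonneg_left m1 (ent 2 2), mul_le_mul_of_nonneg_left m5 (ent 1 1),
      mul_nonneg (mul_nonneg (ent 0 0) (ent 1 1)) (ent 2 2),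
      mul_nonneg (mul_nonneg (ent 0 0) (ent 1 2)) (ent 2 1)]
end
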